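/- For all real parameters v and c with c ≠ 0, the point P₆ = (v/c, 0, 0) is an equilibrium of the reduced replicator vector field, i.e. F_{v,c}(v/c, 0, 0) = (0,0,0), and the characteristic polynomial of the Jacobian matrix J(v/c, 0, 0) equals X²·(X − v·(v−c)/(2c)). -/

import Mathlib

open Polynomial

noncomputable section

/-- The reduced replicator vector field of the asymmetric Hawk-Dove game. -/
def F (v c : ℝ) (p : Fin 3 → ℝ) : Fin 3 → ℝ :=
  ![ (1/4) * p 0 * (c * (2*(p 0)^2 + 2*(p 0)*(p 1 + p 2 - 1) + 2*(p 1)*(p 2) - p 1 - p 2)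
        - v * (2*(p 0) + p 1 + p 2 - 2)),
     -(1/4) * p 1 * (v * (2*(p 0) + p 1 + p 2 - 1) - c * (2*(p 0) + 2*(p 1) - 1) * (p 0 + p 2)),
     -(1/4) * p 2 * (v * (2*(p 0) + p 1 + p 2 - 1) - c * (p 0 + p 1) * (2*(p 0) + 2*(p 2) - 1)) ]

/-- The Jacobian matrix of `F v c` at `p`: the matrix of the Fréchet derivative
with respect to the standard basis. -/
def J (v c : ℝ) (p : Fin 3 → ℝ) : Matrix (Fin 3) (Fin 3) ℝ :=
  Matrix.of fun i j => fderiv ℝ (F v c) p (Pi.single j 1) i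

/-- coordinate projection as a continuous linear map -/
noncomputable def pr (j : Fin 3) : (Fin 3 → ℝ) →L[ℝ] ℝ := ContinuousLinearMap.proj j

lemma hpr (j : Fin 3) (p : Fin 3 → ℝ) : HasFDerivAt (fun p : Fin 3 → ℝ => p j) (pr j) p :=
  (pr j).hasFDerivAt

lemma hF_deriv (v c : ℝ) (hc : c ≠ 0) :
    HasFDerivAt (F v c)
      (ContinuousLinearMap.pi
        ![(v*(v-c)/(2*c)) • pr 0 + (v*(v-c)/(4*c)) • pr 1 + (v*(v-c)/(4*c)) • pr 2, 0, 0])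
      ![v/c, 0, 0] := by
  have h0 : (![v/c, 0, 0] : Fin 3 → ℝ) 0 = v/c := rfl
  have h1 : (![v/c, 0, 0] : Fin 3 → ℝ) 1 = 0 := rfl
  have h2 : (![v/c, 0, 0] : Fin 3 → ℝ) 2 = 0 := rfl
  have H1 : HasFDerivAt
      (fun p : Fin 3 → ℝ => (1/4) * p 0 *
        (c * (2*(p 0)^2 + 2*(p 0)*(p 1 + p 2 - 1) + 2*(p 1)*(p 2) - p 1 - p 2)
          - v * (2*(p 0) + p 1 + p 2 - 2)))
      ((v*(v-c)/(2*c)) • pr 0 + (v*(v-c)/(4*c)) • pr 1 + (v*(v-c)/(4*c)) • pr 2) ![v/c, 0, 0] := by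
    set p : Fin 3 → ℝ := ![v/c, 0, 0]
    refine HasFDerivAt.congr_fderiv
      (((hpr 0 p).const_mul (1/4 : ℝ)).mul
        (((((((HasDerivAt.comp_hasFDerivAt (h₂ := fun x : ℝ => x ^ 2) p (hasDerivAt_pow 2 (p 0)) (hpr 0 p)).const_mul 2).add
            (((hpr 0 p).const_mul 2).mul (((hpr 1 p).add (hpr 2 p)).sub_const 1))).add
            (((hpr 1 p).const_mul 2).mul (hpr 2 p))).sub (hpr 1 p)).sub (hpr 2 p)).const_mul c |>.sub
          ((((((hpr 0 p).const_mul 2).add (hpr 1 p)).add (hpr 2 p)).sub_const 2).const_mul v))) ?_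
    ext w
    simp only [ContinuousLinearMap.add_apply, ContinuousLinearMap.sub_apply,
      ContinuousLinearMap.smul_apply, ContinuousLinearMap.coe_smul', Pi.smul_apply,
      smul_eq_mul, pr, ContinuousLinearMap.proj_apply, Pi.add_apply, p, h0, h1, h2]
    field_simp
    linear_combination (8 * v ^ 2 * w 0) * mul_inv_cancel₀ hc
  have H2 : HasFDerivAt
      (fun p : Fin 3 → ℝ => -(1/4) * p 1 *
        (v * (2*(p 0) + p 1 + p 2 - 1) - c * (2*(p 0) + 2*(p 1) - 1) * (p 0 + p 2)))
      (0 : (Fin 3 → ℝ) →L[ℝ] ℝ) ![v/c, 0, 0] := by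
    set p : Fin 3 → ℝ := ![v/c, 0, 0]
    refine HasFDerivAt.congr_fderiv
      (((hpr 1 p).const_mul (-(1/4) : ℝ)).mul
        ((((((hpr 0 p).const_mul 2).add (hpr 1 p)).add (hpr 2 p)).sub_const 1).const_mul v |>.sub
          (((((hpr 0 p).const_mul 2).add ((hpr 1 p).const_mul 2)).sub_const 1).const_mul c |>.mul
            ((hpr 0 p).add (hpr 2 p))))) ?_
    ext w
    simp only [ContinuousLinearMap.add_apply, ContinuousLinearMap.sub_apply,
      ContinuousLinearMap.smul_apply, ContinuousLinearMap.coe_smul', Pi.smul_apply,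
      ContinuousLinearMap.zero_apply, smul_eq_mul, pr, ContinuousLinearMap.proj_apply,
      p, h0, h1, h2]
    field_simp
    try ring
  have H3 : HasFDerivAt
      (fun p : Fin 3 → ℝ => -(1/4) * p 2 *
        (v * (2*(p 0) + p 1 + p 2 - 1) - c * (p 0 + p 1) * (2*(p 0) + 2*(p 2) - 1)))
      (0 : (Fin 3 → ℝ) →L[ℝ] ℝ) ![v/c, 0, 0] := by
    set p : Fin 3 → ℝ := ![v/c, 0, 0]
    refine HasFDerivAt.congr_fderiv
      (((hpr 2 p).const_mul (-(1/4) : ℝ)).mul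
        ((((((hpr 0 p).const_mul 2).add (hpr 1 p)).add (hpr 2 p)).sub_const 1).const_mul v |>.sub
          ((((hpr 0 p).add (hpr 1 p)).const_mul c).mul
            ((((hpr 0 p).const_mul 2).add ((hpr 2 p).const_mul 2)).sub_const 1)))) ?_
    ext w
    simp only [ContinuousLinearMap.add_apply, ContinuousLinearMap.sub_apply,
      ContinuousLinearMap.smul_apply, ContinuousLinearMap.coe_smul', Pi.smul_apply,
      ContinuousLinearMap.zero_apply, smul_eq_mul, pr, ContinuousLinearMap.proj_apply,
      p, h0, h1, h2]
    field_simp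
    try ring
  rw [hasFDerivAt_pi']
  intro i
  fin_cases i <;>
    simp only [ContinuousLinearMap.proj_pi, Matrix.cons_val_zero, Matrix.cons_val_one,
      Matrix.head_cons, Matrix.cons_val_two, Matrix.tail_cons, Fin.isValue]
  · exact H1
  · exact H2
  · exact H3

lemma J_eval (v c : ℝ) (hc : c ≠ 0) :
    J v c ![v/c, 0, 0] =
      !![v*(v-c)/(2*c), v*(v-c)/(4*c), v*(v-c)/(4*c); 0, 0, 0; 0, 0, 0] := by
  have hfd := (hF_deriv v c hc).fderiv
  ext i j
  simp only [J, Matrix.of_apply, hfd]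
  fin_cases i <;> fin_cases j <;>
    simp [pr, ContinuousLinearMap.pi_apply, Pi.single_apply, Matrix.vecHead, Matrix.vecTail]

theorem equilibrium_P6_charpoly (v c : ℝ) (hc : c ≠ 0) :
    F v c ![v/c, 0, 0] = 0 ∧
    (J v c ![v/c, 0, 0]).charpoly
      = X^2 * (X - C (v*(v - c)/(2*c))) := by
  constructor
  · funext i
    fin_cases i
    · show (1/4) * (v/c) * (c * (2*(v/c)^2 + 2*(v/c)*(0 + 0 - 1) + 2*0*0 - 0 - 0)
          - v * (2*(v/c) + 0 + 0 - 2)) = 0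
      field_simp
      ring
    · show -(1/4) * 0 * (v * (2*(v/c) + 0 + 0 - 1) - c * (2*(v/c) + 2*0 - 1) * (v/c + 0)) = 0
      ring
    · show -(1/4) * 0 * (v * (2*(v/c) + 0 + 0 - 1) - c * (v/c + 0) * (2*(v/c) + 2*0 - 1)) = 0
      ring
  · rw [J_eval v c hc, Matrix.charpoly, Matrix.det_fin_three]
    simp only [Matrix.charmatrix_apply, Matrix.diagonal_apply, Matrix.cons_val_zero,
      Matrix.cons_val_one, Matrix.head_cons, Matrix.cons_val_two, Matrix.tail_cons,
      Matrix.of_apply, Matrix.cons_val', Matrix.empty_val', Matrix.cons_val_fin_one,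
      Matrix.head_fin_const, map_zero, Fin.isValue, if_true, reduceIte, Fin.reduceEq]
    ring
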